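/- For every a ∈ 𝐚: dim T_a = k̄⁰_a − m_a, dim T_a⁻ = m_a⁺ − m_a, dim T_a⁺ = m_a⁻ − m_a, and dim U_a = k̄⁰_a + m_a − m_a⁻ − m_a⁺ = dim S_a. -/

import Mathlib

open MeasureTheory Set Filter

noncomputable section

namespace KnotWavelet

/-- The space `L²(J)` for `J ⊆ ℝ`. -/
abbrev L2S (J : Set ℝ) := Lp ℝ 2 (volume.restrict J)

/-- `f ∈ L²(J)` is supported (a.e.) in `I`. -/
def SuppIn (J : Set ℝ) (f : L2S J) (I : Set ℝ) : Prop :=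
  ∀ᵐ x ∂(volume.restrict J), x ∉ I → f x = 0

/-- `G_I`, the members of `G` supported in `I`. -/
def suppSet (J : Set ℝ) (G : Set (L2S J)) (I : Set ℝ) : Set (L2S J) :=
  {g ∈ G | SuppIn J g I}

/-- For a subspace `V`, the subspace of members supported in `I`. -/
def suppSub (J : Set ℝ) (V : Submodule ℝ (L2S J)) (I : Set ℝ) : Submodule ℝ (L2S J) where
  carrier := {f | f ∈ V ∧ SuppIn J f I}
  zero_mem' := ⟨V.zero_mem, by
    filter_upwards [Lp.coeFn_zero ℝ 2 (volume.restrict J)] with x hx _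
    simpa using hx⟩
  add_mem' := by
    rintro f g ⟨hfV, hf⟩ ⟨hgV, hg⟩
    refine ⟨V.add_mem hfV hgV, ?_⟩
    filter_upwards [Lp.coeFn_add f g, hf, hg] with x hx h1 h2 hxI
    rw [hx]
    simp [Pi.add_apply, h1 hxI, h2 hxI]
  smul_mem' := by
    rintro c f ⟨hfV, hf⟩
    refine ⟨V.smul_mem c hfV, ?_⟩
    filter_upwards [Lp.coeFn_smul c f, hf] with x hx h1 hxI
    rw [hx]
    simp [h1 hxI]

/-- The successor `a₊` of `a` in `ks`, as an extended real (`+∞` if there is none). -/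
def succE (ks : Set ℝ) (a : ℝ) : EReal := sInf ((fun x : ℝ => (x : EReal)) '' {b ∈ ks | a < b})

/-- The predecessor `a₋` of `a` in `ks`, as an extended real (`−∞` if there is none). -/
def predE (ks : Set ℝ) (a : ℝ) : EReal := sSup ((fun x : ℝ => (x : EReal)) '' {b ∈ ks | b < a})

/-- The successor `a₊` of `a` in `ks` as a real number (junk value if there is none). -/
def succR (ks : Set ℝ) (a : ℝ) : ℝ := sInf {b ∈ ks | a < b}

/-- The interval `[a, a₊]`. -/
def IccS (ks : Set ℝ) (a : ℝ) : Set ℝ := {x | a ≤ x ∧ (x : EReal) ≤ succE ks a}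

/-- The interval `[a₋, a₊]`. -/
def IccPS (ks : Set ℝ) (a : ℝ) : Set ℝ :=
  {x | predE ks a ≤ (x : EReal) ∧ (x : EReal) ≤ succE ks a}

/-- The interval `[a₋, a]`. -/
def IccP (ks : Set ℝ) (a : ℝ) : Set ℝ := {x | predE ks a ≤ (x : EReal) ∧ x ≤ a}

/-- The interval `(a, a₊)`. -/
def IooS (ks : Set ℝ) (a : ℝ) : Set ℝ := {x | a < x ∧ (x : EReal) < succE ks a}

/-- The interval `[a₊, ∞)` (empty if `a₊ = +∞`). -/
def IciS (ks : Set ℝ) (a : ℝ) : Set ℝ := {x | succE ks a ≤ (x : EReal)}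

/-- `ks` is a knot sequence in the interval `J`: it is a subset of `J` with at least three
elements, has no cluster (accumulation) point in `J`, and `inf ks = inf J`, `sup ks = sup J`
(as extended reals). -/
structure IsKnotSeq (J ks : Set ℝ) : Prop where
  subset : ks ⊆ J
  nontrivial : ∃ x y z : ℝ, x ∈ ks ∧ y ∈ ks ∧ z ∈ ks ∧ x ≠ y ∧ x ≠ z ∧ y ≠ z
  noCluster : ∀ x ∈ J, ¬ AccPt x (Filter.principal ks)
  inf_eq : sInf ((fun x : ℝ => (x : EReal)) '' ks) = sInf ((fun x : ℝ => (x : EReal)) '' J)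
  sup_eq : sSup ((fun x : ℝ => (x : EReal)) '' ks) = sSup ((fun x : ℝ => (x : EReal)) '' J)

/-- `a'` is the successor of `a` in `ks`. -/
def IsSucc (ks : Set ℝ) (a a' : ℝ) : Prop :=
  a ∈ ks ∧ a' ∈ ks ∧ a < a' ∧ ∀ b ∈ ks, b ≤ a ∨ a' ≤ b

/-- A collection `Φ ⊆ L²(J)` is locally finite: on each compact interval `K ⊆ J` all but
finitely many members of `Φ` vanish (a.e.) on `K`. -/
def LocFin (J : Set ℝ) (Φ : Set (L2S J)) : Prop :=
  ∀ K : Set ℝ, IsCompact K → K ⊆ J →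
    {φ ∈ Φ | ¬ ∀ᵐ x ∂(volume.restrict J), x ∈ K → φ x = 0}.Finite

/-- `Φ̆_a := Φ_{[a,a₊]}`. -/
def breveAt (J : Set ℝ) (ks : Set ℝ) (Φ : Set (L2S J)) (a : ℝ) : Set (L2S J) :=
  suppSet J Φ (IccS ks a)

open Classical in
/-- `Φ̆_{a₋}` (the empty set if `a` has no predecessor). -/
def brevePred (J : Set ℝ) (ks : Set ℝ) (Φ : Set (L2S J)) (a : ℝ) : Set (L2S J) :=
  if {b ∈ ks | b < a}.Nonempty then suppSet J Φ (IccP ks a) else ∅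

/-- `Φ_a := Φ_{[a₋,a₊]} \ Φ̆_{a₋}`. -/
def midAt (J : Set ℝ) (ks : Set ℝ) (Φ : Set (L2S J)) (a : ℝ) : Set (L2S J) :=
  suppSet J Φ (IccPS ks a) \ brevePred J ks Φ a

/-- `Φ̄_a := Φ_a \ Φ̆_a`. -/
def barAt (J : Set ℝ) (ks : Set ℝ) (Φ : Set (L2S J)) (a : ℝ) : Set (L2S J) :=
  midAt J ks Φ a \ breveAt J ks Φ a

open Classical in
/-- `Φ̄_{a₊}` (the empty set if `a` has no successor). -/
def barSucc (J : Set ℝ) (ks : Set ℝ) (Φ : Set (L2S J)) (a : ℝ) : Set (L2S J) :=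
  if {b ∈ ks | a < b}.Nonempty then barAt J ks Φ (succR ks a) else ∅

open Classical in
/-- Multiplication by the characteristic function of `I` (restriction to `I`). -/
def indL2 (J : Set ℝ) (I : Set ℝ) (f : L2S J) : L2S J :=
  if h : MeasurableSet I then ((Lp.memLp f).indicator h).toLp (I.indicator f) else 0

/-- `Φ` is a basis centered on the knot sequence `ks`. -/
def CenteredBasis (J ks : Set ℝ) (Φ : Set (L2S J)) : Prop :=
  LocFin J Φ ∧
  Φ = ⋃ a ∈ ks, midAt J ks Φ a ∧
  ∀ a ∈ ks, LinearIndependent ℝ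
    (fun φ : ↥(midAt J ks Φ a ∪ barSucc J ks Φ a) => indL2 J (IccS ks a) (φ : L2S J))

/-- `S(Φ)`: the `L²`-closure of the span of `Φ`. -/
def SClos (J : Set ℝ) (Φ : Set (L2S J)) : Submodule ℝ (L2S J) :=
  (Submodule.span ℝ Φ).topologicalClosure

/-- An orthogonal basis centered on `ks`. -/
def OrthoCenteredBasis (J ks : Set ℝ) (Φ : Set (L2S J)) : Prop :=
  CenteredBasis J ks Φ ∧ Φ.Pairwise fun f g => (inner ℝ f g : ℝ) = 0

/-- The orthogonal projection onto the closure of a subspace, as a linear map. -/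
def projL {H : Type*} [NormedAddCommGroup H] [InnerProductSpace ℝ H] [CompleteSpace H]
    (K : Submodule ℝ H) : H →ₗ[ℝ] H :=
  K.topologicalClosure.subtype ∘ₗ
    (K.topologicalClosure.orthogonalProjectionOnto : H →L[ℝ] K.topologicalClosure).toLinearMap

/-- The image `P_K U` of a subspace `U` under the orthogonal projection onto (the closure of)
`K`. -/
def projSub {H : Type*} [NormedAddCommGroup H] [InnerProductSpace ℝ H] [CompleteSpace H]
    (K U : Submodule ℝ H) : Submodule ℝ H :=
  U.map (projL K)

/-- The image `(I − P_K) U`. -/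
def oneSubProjSub {H : Type*} [NormedAddCommGroup H] [InnerProductSpace ℝ H] [CompleteSpace H]
    (K U : Submodule ℝ H) : Submodule ℝ H :=
  U.map (LinearMap.id - projL K)

/-- Two subspaces are orthogonal. -/
def PerpSub {H : Type*} [NormedAddCommGroup H] [InnerProductSpace ℝ H]
    (U V : Submodule ℝ H) : Prop :=
  ∀ f ∈ U, ∀ g ∈ V, (inner ℝ f g : ℝ) = 0

end KnotWavelet

namespace KnotWavelet

variable (J ks : Set ℝ)

open Classical in
/-- Multiplication by the characteristic function of `I`, as a linear map. -/
def indLM (I : Set ℝ) : L2S J →ₗ[ℝ] L2S J where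
  toFun := indL2 J I
  map_add' f g := by
    unfold indL2
    split_ifs with h
    · have hf := (Lp.memLp f).indicator h
      have hg := (Lp.memLp g).indicator h
      calc ((Lp.memLp (f + g)).indicator h).toLp (I.indicator ⇑(f + g))
          = (hf.add hg).toLp (I.indicator ⇑f + I.indicator ⇑g) := by
            refine MemLp.toLp_congr _ _ ?_
            filter_upwards [Lp.coeFn_add f g] with x hx
            by_cases hxI : x ∈ I
            · rw [Pi.add_apply, Set.indicator_of_mem hxI, Set.indicator_of_mem hxI,
                Set.indicator_of_mem hxI]
              exact hx
            · rw [Pi.add_apply, Set.indicator_of_notMem hxI, Set.indicator_of_notMem hxI,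
                Set.indicator_of_notMem hxI, add_zero]
        _ = hf.toLp (I.indicator ⇑f) + hg.toLp (I.indicator ⇑g) := MemLp.toLp_add hf hg
    · simp
  map_smul' c f := by
    unfold indL2
    split_ifs with h
    · have hf := (Lp.memLp f).indicator h
      calc ((Lp.memLp (c • f)).indicator h).toLp (I.indicator ⇑(c • f))
          = (hf.const_smul c).toLp (c • I.indicator ⇑f) := by
            refine MemLp.toLp_congr _ _ ?_
            filter_upwards [Lp.coeFn_smul c f] with x hx
            by_cases hxI : x ∈ I
            · rw [Pi.smul_apply, Set.indicator_of_mem hxI, Set.indicator_of_mem hxI]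
              exact hx
            · rw [Pi.smul_apply, Set.indicator_of_notMem hxI, Set.indicator_of_notMem hxI,
                smul_zero]
        _ = c • hf.toLp (I.indicator ⇑f) := MemLp.toLp_const_smul c hf
    · simp

/-- The image `χ_I · U` of a subspace under multiplication by the characteristic function of
`I`. -/
def chiMul (I : Set ℝ) (U : Submodule ℝ (L2S J)) : Submodule ℝ (L2S J) :=
  U.map (indLM J I)

/-- `V_a`, the subspace of members of `V` supported in `[a₋, a₊]`. -/
def Vmid (V : Submodule ℝ (L2S J)) (a : ℝ) : Submodule ℝ (L2S J) :=
  suppSub J V (IccPS ks a)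

/-- `V̆_a`, the subspace of members of `V` supported in `[a, a₊]`. -/
def Vbreve (V : Submodule ℝ (L2S J)) (a : ℝ) : Submodule ℝ (L2S J) :=
  suppSub J V (IccS ks a)

open Classical in
/-- `V̆_{a₋}` (the zero subspace if `a` has no predecessor in `ks`). -/
def VbrevePred (V : Submodule ℝ (L2S J)) (a : ℝ) : Submodule ℝ (L2S J) :=
  if {b ∈ ks | b < a}.Nonempty then suppSub J V (IccP ks a) else ⊥

/-- `V̄_a := (I − P_{V̆_{a₋} ⊕ V̆_a}) V_a`. -/
def Vbar (V : Submodule ℝ (L2S J)) (a : ℝ) : Submodule ℝ (L2S J) :=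
  oneSubProjSub (VbrevePred J ks V a ⊔ Vbreve J ks V a) (Vmid J ks V a)

/-- `A_a⁺ := P_{V̆¹_a} V̄⁰_a`. -/
def Aplus (V₀ V₁ : Submodule ℝ (L2S J)) (a : ℝ) : Submodule ℝ (L2S J) :=
  projSub (Vbreve J ks V₁ a) (Vbar J ks V₀ a)

/-- `A_a⁻ := P_{V̆¹_{a₋}} V̄⁰_a`. -/
def Aminus (V₀ V₁ : Submodule ℝ (L2S J)) (a : ℝ) : Submodule ℝ (L2S J) :=
  projSub (VbrevePred J ks V₁ a) (Vbar J ks V₀ a)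

/-- The wavelet space `W := V¹ ⊖ V⁰`, the orthogonal complement of `V⁰` in `V¹`. -/
def Wsp (V₀ V₁ : Submodule ℝ (L2S J)) : Submodule ℝ (L2S J) :=
  V₁ ⊓ V₀ᗮ

/-- `W̄_a := W_a ⊖ (W̆_{a₋} ⊕ W̆_a)`. -/
def Wbar (V₀ V₁ : Submodule ℝ (L2S J)) (a : ℝ) : Submodule ℝ (L2S J) :=
  Vmid J ks (Wsp J V₀ V₁) a ⊓
    (VbrevePred J ks (Wsp J V₀ V₁) a ⊔ Vbreve J ks (Wsp J V₀ V₁) a)ᗮ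

/-- `Y_a := V̄⁰_a ∩ V̄¹_a`. -/
def Ysp (V₀ V₁ : Submodule ℝ (L2S J)) (a : ℝ) : Submodule ℝ (L2S J) :=
  Vbar J ks V₀ a ⊓ Vbar J ks V₁ a

/-- `Y_a⁺ := (χ_{[a,a₊]}·V̄⁰_a) ∩ (χ_{[a,a₊]}·V̄¹_a)`. -/
def Yplus (V₀ V₁ : Submodule ℝ (L2S J)) (a : ℝ) : Submodule ℝ (L2S J) :=
  chiMul J (IccS ks a) (Vbar J ks V₀ a) ⊓ chiMul J (IccS ks a) (Vbar J ks V₁ a)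

/-- `Y_a⁻ := (χ_{[a₋,a]}·V̄⁰_a) ∩ (χ_{[a₋,a]}·V̄¹_a)`. -/
def Yminus (V₀ V₁ : Submodule ℝ (L2S J)) (a : ℝ) : Submodule ℝ (L2S J) :=
  chiMul J (IccP ks a) (Vbar J ks V₀ a) ⊓ chiMul J (IccP ks a) (Vbar J ks V₁ a)

/-- `X_a⁺ := (χ_{[a,a₊]}·V̄⁰_a) ⊖ Y_a⁺`. -/
def Xplus (V₀ V₁ : Submodule ℝ (L2S J)) (a : ℝ) : Submodule ℝ (L2S J) :=
  chiMul J (IccS ks a) (Vbar J ks V₀ a) ⊓ (Yplus J ks V₀ V₁ a)ᗮ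

/-- `X_a⁻ := (χ_{[a₋,a]}·V̄⁰_a) ⊖ Y_a⁻`. -/
def Xminus (V₀ V₁ : Submodule ℝ (L2S J)) (a : ℝ) : Submodule ℝ (L2S J) :=
  chiMul J (IccP ks a) (Vbar J ks V₀ a) ⊓ (Yminus J ks V₀ V₁ a)ᗮ

/-- `T_a := (I − P_{V̄¹_a}) V̄⁰_a`. -/
def Tsp (V₀ V₁ : Submodule ℝ (L2S J)) (a : ℝ) : Submodule ℝ (L2S J) :=
  oneSubProjSub (Vbar J ks V₁ a) (Vbar J ks V₀ a)

/-- `T_a⁻ := {f ∈ T_a : supp f ⊆ [a₋,a]}`. -/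
def Tminus (V₀ V₁ : Submodule ℝ (L2S J)) (a : ℝ) : Submodule ℝ (L2S J) :=
  suppSub J (Tsp J ks V₀ V₁ a) (IccP ks a)

/-- `T_a⁺ := {f ∈ T_a : supp f ⊆ [a,a₊]}`. -/
def Tplus (V₀ V₁ : Submodule ℝ (L2S J)) (a : ℝ) : Submodule ℝ (L2S J) :=
  suppSub J (Tsp J ks V₀ V₁ a) (IccS ks a)

/-- `U_a := T_a ⊖ (T_a⁻ ⊕ T_a⁺)`. -/
def Usp (V₀ V₁ : Submodule ℝ (L2S J)) (a : ℝ) : Submodule ℝ (L2S J) :=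
  Tsp J ks V₀ V₁ a ⊓ (Tminus J ks V₀ V₁ a ⊔ Tplus J ks V₀ V₁ a)ᗮ

/-- `S_a := (χ_{[a,a₊]} − χ_{[a₋,a]})·U_a`. -/
def Ssp (V₀ V₁ : Submodule ℝ (L2S J)) (a : ℝ) : Submodule ℝ (L2S J) :=
  (Usp J ks V₀ V₁ a).map (indLM J (IccS ks a) - indLM J (IccP ks a))

/-- `Ŵ_a := (I − P_{V̄⁰_a}) V̄¹_a`. -/
def What (V₀ V₁ : Submodule ℝ (L2S J)) (a : ℝ) : Submodule ℝ (L2S J) :=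
  oneSubProjSub (Vbar J ks V₀ a) (Vbar J ks V₁ a)

/-- `W̃_a := W̄_a ⊖ Ŵ_a`. -/
def Wtilde (V₀ V₁ : Submodule ℝ (L2S J)) (a : ℝ) : Submodule ℝ (L2S J) :=
  Wbar J ks V₀ V₁ a ⊓ (What J ks V₀ V₁ a)ᗮ

end KnotWavelet

namespace KnotWavelet

variable (J ks : Set ℝ)

section Abstract
set_option linter.unusedSectionVars false
set_option linter.dupNamespace false

open Submodule Module

variable {E : Type*} [NormedAddCommGroup E] [InnerProductSpace ℝ E] [CompleteSpace E]

local notation "⟪" x ", " y "⟫" => @inner ℝ _ _ x y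

lemma orthogonal_topClosure (K : Submodule ℝ E) : K.topologicalClosureᗮ = Kᗮ := by
  apply le_antisymm
  · exact Submodule.orthogonal_le K.le_topologicalClosure
  · intro v hv
    rw [Submodule.mem_orthogonal]
    intro u hu
    have h1 : K.topologicalClosure ≤ Kᗮᗮ :=
      K.topologicalClosure_minimal K.le_orthogonal_orthogonal Kᗮ.isClosed_orthogonal
    have h2 := (Submodule.mem_orthogonal (Kᗮ) u).mp (h1 hu) v hv
    rw [real_inner_comm]
    exact h2

lemma projL_mem (K : Submodule ℝ E) (x : E) : projL K x ∈ K.topologicalClosure := by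
  exact (K.topologicalClosure.orthogonalProjectionOnto x).2

lemma sub_projL_mem (K : Submodule ℝ E) (x : E) : x - projL K x ∈ Kᗮ := by
  rw [← orthogonal_topClosure]
  exact Submodule.sub_starProjection_mem_orthogonal (K := K.topologicalClosure) x

lemma projL_eq_self (K : Submodule ℝ E) {x : E} (hx : x ∈ K.topologicalClosure) :
    projL K x = x :=
  (Submodule.starProjection_eq_self_iff (K := K.topologicalClosure)).mpr hx

lemma projL_eq_zero (K : Submodule ℝ E) {x : E} (hx : x ∈ Kᗮ) : projL K x = 0 := by
  have hx' : x ∈ K.topologicalClosureᗮ := by rw [orthogonal_topClosure]; exact hx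
  show (↑(K.topologicalClosure.orthogonalProjectionOnto x) : E) = 0
  rw [Submodule.orthogonalProjectionOnto_apply_of_mem_orthogonal hx']
  rfl

lemma topClosure_eq_of_fd (K : Submodule ℝ E) [FiniteDimensional ℝ K] :
    K.topologicalClosure = K :=
  le_antisymm (K.topologicalClosure_minimal le_rfl K.closed_of_finiteDimensional)
    K.le_topologicalClosure

lemma finrank_map_add_inf (p : Submodule ℝ E) [FiniteDimensional ℝ p] (f : E →ₗ[ℝ] E)
    (q : Submodule ℝ E) (h : ∀ x ∈ p, f x = 0 ↔ x ∈ q) :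
    finrank ℝ (p.map f) + finrank ℝ ↥(p ⊓ q) = finrank ℝ p := by
  have h1 := LinearMap.finrank_range_add_finrank_ker (f.domRestrict p)
  have hr : LinearMap.range (f.domRestrict p) = p.map f := by
    ext y
    simp only [LinearMap.mem_range, Submodule.mem_map, LinearMap.domRestrict_apply]
    constructor
    · rintro ⟨⟨x, hx⟩, rfl⟩; exact ⟨x, hx, rfl⟩
    · rintro ⟨x, hx, rfl⟩; exact ⟨⟨x, hx⟩, rfl⟩
  have hk : LinearMap.ker (f.domRestrict p) = (p ⊓ q).comap p.subtype := by
    ext ⟨x, hx⟩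
    simp only [LinearMap.mem_ker, LinearMap.domRestrict_apply, Submodule.mem_comap,
      Submodule.coe_subtype, Submodule.mem_inf]
    rw [h x hx]
    exact ⟨fun hq => ⟨hx, hq⟩, fun hq => hq.2⟩
  rw [hr, hk] at h1
  rw [← h1]
  congr 1
  exact (Submodule.comapSubtypeEquivOfLe (inf_le_left : p ⊓ q ≤ p)).finrank_eq.symm

lemma projL_mem' (K : Submodule ℝ E) [FiniteDimensional ℝ K] (x : E) : projL K x ∈ K := by
  have := projL_mem K x
  rwa [topClosure_eq_of_fd] at this

lemma theta_zero_iff (B : Submodule ℝ E) [FiniteDimensional ℝ B] (x : E) :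
    ((LinearMap.id - projL B : E →ₗ[ℝ] E)) x = 0 ↔ x ∈ B := by
  constructor
  · intro hx
    have h2 : x = projL B x := by
      have h3 : x - projL B x = 0 := hx
      rwa [sub_eq_zero] at h3
    rw [h2]
    exact projL_mem' B x
  · intro hx
    have h4 : projL B x = x := projL_eq_self B (by rw [topClosure_eq_of_fd]; exact hx)
    show x - projL B x = 0
    rw [h4, sub_self]

lemma theta_fix (B : Submodule ℝ E) {x : E} (hx : ∀ b ∈ B, ⟪x, b⟫ = 0) :
    ((LinearMap.id - projL B : E →ₗ[ℝ] E)) x = x := by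
  have hxo : x ∈ Bᗮ := (Submodule.mem_orthogonal' B x).mpr hx
  show x - projL B x = x
  rw [projL_eq_zero B hxo, sub_zero]

lemma theta_sub_mem (B : Submodule ℝ E) [FiniteDimensional ℝ B] (x : E) :
    x - ((LinearMap.id - projL B : E →ₗ[ℝ] E)) x ∈ B := by
  have h5 : x - ((LinearMap.id - projL B : E →ₗ[ℝ] E)) x = projL B x := by
    show x - (x - projL B x) = projL B x
    abel
  rw [h5]
  exact projL_mem' B x

lemma theta_perp (B : Submodule ℝ E) (x : E) {b : E} (hb : b ∈ B) :
    ⟪((LinearMap.id - projL B : E →ₗ[ℝ] E)) x, b⟫ = 0 := by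
  have h1 : x - projL B x ∈ Bᗮ := sub_projL_mem B x
  exact (Submodule.mem_orthogonal' B _).mp h1 b hb

lemma abstract_c1 (A B : Submodule ℝ E) [FiniteDimensional ℝ A] [FiniteDimensional ℝ B] :
    finrank ℝ (A.map (LinearMap.id - projL B)) + finrank ℝ ↥(A ⊓ B) = finrank ℝ A :=
  finrank_map_add_inf A _ B (fun x _ => theta_zero_iff B x)

lemma abstract_c2
    (em ep : E →ₗ[ℝ] E) (A B V1m Km : Submodule ℝ E)
    [FiniteDimensional ℝ V1m]
    (hA : A ≤ V1m) (hB : B ≤ V1m)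
    (h1 : ∀ f ∈ V1m, em f + ep f = f)
    (hKm : ∀ f, f ∈ Km ↔ em f = f)
    (hpm : ∀ f, ep (em f) = 0)
    (hBm : ∀ g ∈ V1m, em g = g → ∀ b ∈ B, ⟪g, b⟫ = 0)
    (hAm : ∀ f ∈ A, em f = f → f = 0) :
    finrank ℝ ↥(A.map (LinearMap.id - projL B) ⊓ Km) + finrank ℝ ↥(A ⊓ B)
      = finrank ℝ ↥(A.map ep ⊓ B.map ep) := by
  classical
  haveI : FiniteDimensional ℝ A := Submodule.finiteDimensional_of_le hA
  haveI : FiniteDimensional ℝ B := Submodule.finiteDimensional_of_le hB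
  set θ : E →ₗ[ℝ] E := LinearMap.id - projL B with hθdef
  set A' : Submodule ℝ E := A ⊓ Submodule.comap ep (B.map ep) with hA'def
  haveI : FiniteDimensional ℝ A' := Submodule.finiteDimensional_of_le
    ((inf_le_left : A' ≤ A).trans hA)
  -- finrank A' = finrank (A.map ep ⊓ B.map ep)
  have hstep1 : finrank ℝ A' = finrank ℝ ↥(A.map ep ⊓ B.map ep) := by
    have h11 := LinearMap.finrank_range_add_finrank_ker (ep.domRestrict A')
    have hr : LinearMap.range (ep.domRestrict A') = A.map ep ⊓ B.map ep := by
      ext y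
      simp only [LinearMap.mem_range, LinearMap.domRestrict_apply, Submodule.mem_inf,
        Submodule.mem_map]
      constructor
      · rintro ⟨⟨x, hxA, hxB⟩, rfl⟩
        exact ⟨⟨x, hxA, rfl⟩, hxB⟩
      · rintro ⟨⟨x, hxA, rfl⟩, hyB⟩
        exact ⟨⟨x, hxA, hyB⟩, rfl⟩
    have hk : LinearMap.ker (ep.domRestrict A') = ⊥ := by
      rw [Submodule.eq_bot_iff]
      rintro ⟨x, hxA, hxB⟩ hx
      have hx0 : ep x = 0 := hx
      have hxm : em x = x := by
        have := h1 x (hA hxA)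
        rwa [hx0, add_zero] at this
      have : x = 0 := hAm x hxA hxm
      simp [this]
    rw [hr, hk] at h11
    rw [← h11, finrank_bot, add_zero]
  -- A' ⊓ B = A ⊓ B
  have hAB : A' ⊓ B = A ⊓ B := by
    ext x
    simp only [hA'def, Submodule.mem_inf, Submodule.mem_comap]
    constructor
    · rintro ⟨⟨hxA, -⟩, hxB⟩; exact ⟨hxA, hxB⟩
    · rintro ⟨hxA, hxB⟩
      exact ⟨⟨hxA, ⟨x, hxB, rfl⟩⟩, hxB⟩
  -- T ⊓ Km = A'.map θ
  have hTKm : A.map θ ⊓ Km = A'.map θ := by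
    ext t
    simp only [Submodule.mem_inf, Submodule.mem_map]
    constructor
    · rintro ⟨⟨f, hfA, rfl⟩, htm⟩
      have h3 : em (θ f) = θ f := (hKm _).mp htm
      refine ⟨f, ⟨hfA, ?_⟩, rfl⟩
      have hsub := theta_sub_mem B f
      have hepθ : ep (θ f) = 0 := by rw [← h3, hpm]
      have : ep f = ep (f - θ f) := by rw [map_sub, hepθ, sub_zero]
      exact ⟨f - θ f, hsub, this.symm⟩
    · rintro ⟨f, ⟨hfA, hfB⟩, rfl⟩
      obtain ⟨h, hhB, hhp⟩ := hfB
      have hcV : f - h ∈ V1m := V1m.sub_mem (hA hfA) (hB hhB)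
      have hepc : ep (f - h) = 0 := by rw [map_sub, hhp, sub_self]
      have hemc : em (f - h) = f - h := by
        have := h1 (f - h) hcV
        rwa [hepc, add_zero] at this
      have hperp : ∀ b ∈ B, ⟪f - h, b⟫ = 0 := hBm (f - h) hcV hemc
      have hθc : θ (f - h) = f - h := theta_fix B hperp
      have hθh : θ h = 0 := (theta_zero_iff B h).mpr hhB
      have hθf : θ f = f - h := by
        have heq : θ f = θ (f - h) + θ h := by rw [← map_add]; congr 1; abel
        rw [heq, hθc, hθh, add_zero]
      refine ⟨⟨f, hfA, rfl⟩, ?_⟩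
      rw [hθf]
      exact (hKm _).mpr hemc
  have hstep3 : finrank ℝ (A'.map θ) + finrank ℝ ↥(A' ⊓ B) = finrank ℝ A' :=
    finrank_map_add_inf A' θ B (fun x _ => theta_zero_iff B x)
  rw [hAB] at hstep3
  rw [hTKm, hstep3, hstep1]

lemma finrank_inf_orthogonal (T S : Submodule ℝ E) [FiniteDimensional ℝ T] (hST : S ≤ T) :
    finrank ℝ ↥(T ⊓ Sᗮ) + finrank ℝ S = finrank ℝ T := by
  haveI : FiniteDimensional ℝ S := Submodule.finiteDimensional_of_le hST
  haveI : FiniteDimensional ℝ ↥(T ⊓ Sᗮ) :=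
    Submodule.finiteDimensional_of_le (inf_le_left : T ⊓ Sᗮ ≤ T)
  have hdisj : S ⊓ (T ⊓ Sᗮ) = ⊥ := by
    rw [eq_bot_iff]
    rintro x ⟨hxS, -, hxO⟩
    have h0 : ⟪x, x⟫ = 0 := (Submodule.mem_orthogonal S x).mp hxO x hxS
    have : x = 0 := inner_self_eq_zero.mp h0
    simp [this]
  have hsup : S ⊔ (T ⊓ Sᗮ) = T := by
    apply le_antisymm (sup_le hST inf_le_left)
    intro x hx
    have hPx : projL S x ∈ S := projL_mem' S x
    have hxs : x - projL S x ∈ Sᗮ := sub_projL_mem S x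
    have hdec : x = projL S x + (x - projL S x) := by abel
    rw [hdec]
    exact Submodule.add_mem_sup hPx ⟨T.sub_mem hx (hST hPx), hxs⟩
  have hh := Submodule.finrank_sup_add_finrank_inf_eq S (T ⊓ Sᗮ)
  rw [hsup, hdisj, finrank_bot, add_zero] at hh
  omega

lemma abstract_c4 (T S1 S2 : Submodule ℝ E) [FiniteDimensional ℝ T]
    (h1 : S1 ≤ T) (h2 : S2 ≤ T)
    (horth : ∀ x ∈ S1, ∀ y ∈ S2, ⟪x, y⟫ = 0) :
    finrank ℝ ↥(T ⊓ (S1 ⊔ S2)ᗮ) + finrank ℝ S1 + finrank ℝ S2 = finrank ℝ T := by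
  haveI : FiniteDimensional ℝ S1 := Submodule.finiteDimensional_of_le h1
  haveI : FiniteDimensional ℝ S2 := Submodule.finiteDimensional_of_le h2
  have hmain := finrank_inf_orthogonal T (S1 ⊔ S2) (sup_le h1 h2)
  have hdisj : S1 ⊓ S2 = ⊥ := by
    rw [eq_bot_iff]
    rintro x ⟨hx1, hx2⟩
    have h0 : ⟪x, x⟫ = 0 := horth x hx1 x hx2
    have : x = 0 := inner_self_eq_zero.mp h0
    simp [this]
  have hh := Submodule.finrank_sup_add_finrank_inf_eq S1 S2
  rw [hdisj, finrank_bot, add_zero] at hh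
  omega

lemma abstract_c5 (φ : E →ₗ[ℝ] E) (U : Submodule ℝ E) [FiniteDimensional ℝ U]
    (hinj : ∀ x ∈ U, φ x = 0 → x = 0) :
    finrank ℝ (U.map φ) = finrank ℝ U := by
  have h := finrank_map_add_inf U φ ⊥ (fun x hx => ⟨fun h0 => by simpa using hinj x hx h0,
    fun h0 => by simp at h0; simp [h0]⟩)
  rw [inf_bot_eq, finrank_bot, add_zero] at h
  exact h

lemma abstract_all (em ep : E →ₗ[ℝ] E) (A B V1m Km Kp : Submodule ℝ E)
    [FiniteDimensional ℝ V1m]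
    (hA : A ≤ V1m) (hB : B ≤ V1m)
    (h1 : ∀ f ∈ V1m, em f + ep f = f)
    (hKm : ∀ f, f ∈ Km ↔ em f = f) (hKp : ∀ f, f ∈ Kp ↔ ep f = f)
    (hmm : ∀ f, em (em f) = em f) (hpp : ∀ f, ep (ep f) = ep f)
    (hmp : ∀ f, em (ep f) = 0) (hpm : ∀ f, ep (em f) = 0)
    (horth : ∀ f g : E, ⟪em f, ep g⟫ = 0)
    (hBm : ∀ g ∈ V1m, em g = g → ∀ b ∈ B, ⟪g, b⟫ = 0)
    (hBp : ∀ g ∈ V1m, ep g = g → ∀ b ∈ B, ⟪g, b⟫ = 0)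
    (hAm : ∀ f ∈ A, em f = f → f = 0)
    (hAp : ∀ f ∈ A, ep f = f → f = 0) :
    finrank ℝ (A.map (LinearMap.id - projL B)) + finrank ℝ ↥(A ⊓ B) = finrank ℝ A ∧
    finrank ℝ ↥(A.map (LinearMap.id - projL B) ⊓ Km) + finrank ℝ ↥(A ⊓ B)
      = finrank ℝ ↥(A.map ep ⊓ B.map ep) ∧
    finrank ℝ ↥(A.map (LinearMap.id - projL B) ⊓ Kp) + finrank ℝ ↥(A ⊓ B)
      = finrank ℝ ↥(A.map em ⊓ B.map em) ∧
    finrank ℝ ↥(A.map (LinearMap.id - projL B) ⊓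
        ((A.map (LinearMap.id - projL B) ⊓ Km) ⊔ (A.map (LinearMap.id - projL B) ⊓ Kp))ᗮ)
      + finrank ℝ ↥(A.map (LinearMap.id - projL B) ⊓ Km)
      + finrank ℝ ↥(A.map (LinearMap.id - projL B) ⊓ Kp)
      = finrank ℝ (A.map (LinearMap.id - projL B)) ∧
    finrank ℝ ((A.map (LinearMap.id - projL B) ⊓
        ((A.map (LinearMap.id - projL B) ⊓ Km) ⊔ (A.map (LinearMap.id - projL B) ⊓ Kp))ᗮ).map
        (ep - em))
      = finrank ℝ ↥(A.map (LinearMap.id - projL B) ⊓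
        ((A.map (LinearMap.id - projL B) ⊓ Km) ⊔ (A.map (LinearMap.id - projL B) ⊓ Kp))ᗮ) := by
  haveI : FiniteDimensional ℝ A := Submodule.finiteDimensional_of_le hA
  haveI : FiniteDimensional ℝ B := Submodule.finiteDimensional_of_le hB
  set θ : E →ₗ[ℝ] E := LinearMap.id - projL B with hθdef
  set T : Submodule ℝ E := A.map θ with hTdef
  haveI : FiniteDimensional ℝ T := Module.Finite.map A θ
  have hT_le : T ≤ V1m := by
    rintro t ⟨f, hfA, rfl⟩
    have h6 : f - θ f ∈ B := theta_sub_mem B f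
    have h7 : θ f = f - (f - θ f) := by abel
    rw [h7]
    exact V1m.sub_mem (hA hfA) (hB h6)
  refine ⟨abstract_c1 A B,
    abstract_c2 em ep A B V1m Km hA hB h1 hKm hpm hBm hAm,
    abstract_c2 ep em A B V1m Kp hA hB
      (fun f hf => by rw [add_comm]; exact h1 f hf) hKp hmp hBp hAp, ?_, ?_⟩
  · apply abstract_c4 T (T ⊓ Km) (T ⊓ Kp) inf_le_left inf_le_left
    rintro x ⟨-, hxm⟩ y ⟨-, hyp⟩
    rw [← (hKm x).mp hxm, ← (hKp y).mp hyp]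
    exact horth x y
  · haveI : FiniteDimensional ℝ ↥(T ⊓ (T ⊓ Km ⊔ T ⊓ Kp)ᗮ) :=
      Submodule.finiteDimensional_of_le (inf_le_left : T ⊓ (T ⊓ Km ⊔ T ⊓ Kp)ᗮ ≤ T)
    apply abstract_c5
    intro x hx hx0
    have hxV : x ∈ V1m := hT_le hx.1
    have hinv : (ep - em) ((ep - em) x) = x := by
      simp only [LinearMap.sub_apply, map_sub]
      rw [hpp, hmp, hpm, hmm]
      have := h1 x hxV
      -- ep x - 0 - (0 - em x) = x
      rw [sub_zero, zero_sub, sub_neg_eq_add, add_comm]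
      exact this
    rw [← hinv, hx0, map_zero]

end Abstract

section Concrete

open MeasureTheory Set

local notation "⟪" x ", " y "⟫" => @inner ℝ _ _ x y

variable (J ks : Set ℝ) (a : ℝ)

lemma predE_le_coe : predE ks a ≤ (a : EReal) := by
  apply sSup_le
  rintro y ⟨b, ⟨-, hb⟩, rfl⟩
  exact EReal.coe_le_coe_iff.mpr hb.le

lemma coe_le_succE : (a : EReal) ≤ succE ks a := by
  apply le_sInf
  rintro y ⟨b, ⟨-, hb⟩, rfl⟩
  exact EReal.coe_le_coe_iff.mpr hb.le

lemma IccP_subset_IccPS : IccP ks a ⊆ IccPS ks a := by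
  rintro x ⟨h1, h2⟩
  exact ⟨h1, le_trans (by exact_mod_cast h2) (coe_le_succE ks a)⟩

lemma IccS_subset_IccPS : IccS ks a ⊆ IccPS ks a := by
  rintro x ⟨h1, h2⟩
  exact ⟨le_trans (predE_le_coe ks a) (by exact_mod_cast h1), h2⟩

lemma IccP_union_IccS : IccP ks a ∪ IccS ks a = IccPS ks a := by
  ext x
  constructor
  · rintro (h | h)
    · exact IccP_subset_IccPS ks a h
    · exact IccS_subset_IccPS ks a h
  · rintro ⟨h1, h2⟩
    rcases le_total x a with h | h
    · exact Or.inl ⟨h1, h⟩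
    · exact Or.inr ⟨h, h2⟩

lemma IccP_inter_IccS : IccP ks a ∩ IccS ks a = {a} := by
  ext x
  constructor
  · rintro ⟨⟨-, h1⟩, h2, -⟩
    exact le_antisymm h1 h2
  · intro hx
    have hx' : x = a := hx
    rw [hx']
    exact ⟨⟨predE_le_coe ks a, le_rfl⟩, le_rfl, coe_le_succE ks a⟩

lemma measurableSet_IccP : MeasurableSet (IccP ks a) := by
  have h : IccP ks a = ((↑) : ℝ → EReal) ⁻¹' (Set.Ici (predE ks a)) ∩ Set.Iic a := rfl
  rw [h]
  exact (measurable_coe_real_ereal measurableSet_Ici).inter measurableSet_Iic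

lemma measurableSet_IccS : MeasurableSet (IccS ks a) := by
  have h : IccS ks a = Set.Ici a ∩ ((↑) : ℝ → EReal) ⁻¹' (Set.Iic (succE ks a)) := rfl
  rw [h]
  exact measurableSet_Ici.inter (measurable_coe_real_ereal measurableSet_Iic)

lemma measurableSet_IccPS : MeasurableSet (IccPS ks a) := by
  have h : IccPS ks a = ((↑) : ℝ → EReal) ⁻¹' (Set.Ici (predE ks a)) ∩
      ((↑) : ℝ → EReal) ⁻¹' (Set.Iic (succE ks a)) := rfl
  rw [h]
  exact (measurable_coe_real_ereal measurableSet_Ici).inter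
    (measurable_coe_real_ereal measurableSet_Iic)

lemma ae_ne_a : ∀ᵐ x ∂(volume.restrict J), x ≠ a := by
  have h0 : (volume.restrict J) {a} = 0 := by
    apply le_antisymm _ (by positivity)
    calc (volume.restrict J) {a} ≤ volume {a} := Measure.restrict_le_self {a}
      _ = 0 := Real.volume_singleton
  rw [MeasureTheory.ae_iff]
  convert h0 using 2
  ext x
  simp

variable {I : Set ℝ}

lemma indLM_coeFn (hI : MeasurableSet I) (f : L2S J) :
    ⇑(indLM J I f) =ᵐ[volume.restrict J] I.indicator ⇑f := by
  show ⇑(indL2 J I f) =ᵐ[volume.restrict J] I.indicator ⇑f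
  rw [indL2, dif_pos hI]
  exact MemLp.coeFn_toLp _

lemma SuppIn_iff_indLM (hI : MeasurableSet I) (f : L2S J) :
    SuppIn J f I ↔ indLM J I f = f := by
  constructor
  · intro h
    apply Lp.ext
    filter_upwards [indLM_coeFn J hI f, h] with x hx hx2
    rw [hx]
    by_cases hxI : x ∈ I
    · simp [Set.indicator_of_mem hxI]
    · simp [Set.indicator_of_notMem hxI, hx2 hxI]
  · intro h
    have h2 := indLM_coeFn J hI f
    rw [h] at h2
    filter_upwards [h2] with x hx hxI
    rw [hx, Set.indicator_of_notMem hxI]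

lemma SuppIn_mono {I' : Set ℝ} (hII' : I ⊆ I') {f : L2S J} (h : SuppIn J f I) :
    SuppIn J f I' := by
  filter_upwards [h] with x hx hxI'
  exact hx fun hxI => hxI' (hII' hxI)

lemma indicator_ae_congr {μ : Measure ℝ} (I : Set ℝ) {g h : ℝ → ℝ} (hgh : g =ᵐ[μ] h) :
    I.indicator g =ᵐ[μ] I.indicator h := by
  filter_upwards [hgh] with x hx
  by_cases hI : x ∈ I <;> simp [Set.indicator, hI, hx]

lemma indLM_indLM_self (hI : MeasurableSet I) (f : L2S J) :
    indLM J I (indLM J I f) = indLM J I f := by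
  apply Lp.ext
  have h1 := indLM_coeFn J hI (indLM J I f)
  have h2 := indicator_ae_congr I (indLM_coeFn J hI f)
  have h3 := indLM_coeFn J hI f
  filter_upwards [h1, h2, h3] with x hx1 hx2 hx3
  rw [hx1, hx2, hx3, Set.indicator_indicator, Set.inter_self]

lemma indLM_comp_null {I' : Set ℝ} (hI : MeasurableSet I) (hI' : MeasurableSet I')
    (hnull : ∀ᵐ x ∂(volume.restrict J), x ∉ I ∩ I') (f : L2S J) :
    indLM J I (indLM J I' f) = 0 := by
  apply Lp.ext
  have h1 := indLM_coeFn J hI (indLM J I' f)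
  have h2 := indicator_ae_congr I (indLM_coeFn J hI' f)
  filter_upwards [h1, h2, hnull, Lp.coeFn_zero ℝ 2 (volume.restrict J)] with x hx1 hx2 hx3 hx0
  rw [hx1, hx2, hx0, Set.indicator_indicator, Set.indicator_of_notMem hx3]
  rfl

lemma ae_not_mem_IccP_inter_IccS :
    ∀ᵐ x ∂(volume.restrict J), x ∉ IccP ks a ∩ IccS ks a := by
  filter_upwards [ae_ne_a J a] with x hx hmem
  rw [IccP_inter_IccS] at hmem
  exact hx hmem

lemma indLM_add_eq {f : L2S J} (hsupp : SuppIn J f (IccPS ks a)) :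
    indLM J (IccP ks a) f + indLM J (IccS ks a) f = f := by
  apply Lp.ext
  filter_upwards [Lp.coeFn_add (indLM J (IccP ks a) f) (indLM J (IccS ks a) f),
    indLM_coeFn J (measurableSet_IccP ks a) f, indLM_coeFn J (measurableSet_IccS ks a) f,
    hsupp, ae_ne_a J a] with x hadd hm hp hs hxa
  rw [hadd, Pi.add_apply, hm, hp]
  by_cases h1 : x ∈ IccP ks a
  · have h2 : x ∉ IccS ks a := fun h2 => hxa (by
      have h4 := Set.mem_inter h1 h2
      rwa [IccP_inter_IccS] at h4)
    rw [Set.indicator_of_mem h1, Set.indicator_of_notMem h2, add_zero]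
  · by_cases h2 : x ∈ IccS ks a
    · rw [Set.indicator_of_notMem h1, Set.indicator_of_mem h2, zero_add]
    · have h3 : x ∉ IccPS ks a := by
        rw [← IccP_union_IccS]
        simp [h1, h2]
      rw [Set.indicator_of_notMem h1, Set.indicator_of_notMem h2, add_zero, hs h3]

lemma inner_indLM_P_S (f g : L2S J) :
    ⟪indLM J (IccP ks a) f, indLM J (IccS ks a) g⟫ = 0 := by
  rw [MeasureTheory.L2.inner_def]
  apply integral_eq_zero_of_ae
  filter_upwards [indLM_coeFn J (measurableSet_IccP ks a) f,
    indLM_coeFn J (measurableSet_IccS ks a) g, ae_ne_a J a] with x h1 h2 hxa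
  rw [Pi.zero_apply, h1, h2]
  simp only [RCLike.inner_apply, conj_trivial]
  by_cases hP : x ∈ IccP ks a
  · have hS : x ∉ IccS ks a := fun h3 => hxa (by
      have h4 := Set.mem_inter hP h3
      rwa [IccP_inter_IccS] at h4)
    rw [Set.indicator_of_notMem hS, zero_mul]
  · rw [Set.indicator_of_notMem hP, mul_zero]

lemma indLM_norm_le (hI : MeasurableSet I) (f : L2S J) : ‖indLM J I f‖ ≤ ‖f‖ := by
  show ‖indL2 J I f‖ ≤ ‖f‖
  rw [indL2, dif_pos hI, Lp.norm_toLp, Lp.norm_def]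
  exact ENNReal.toReal_mono (Lp.eLpNorm_ne_top f) (eLpNorm_indicator_le _)

lemma indLM_continuous (hI : MeasurableSet I) : Continuous (indLM J I) :=
  AddMonoidHomClass.continuous_of_bound (indLM J I) 1
    (fun f => by rw [one_mul]; exact indLM_norm_le J hI f)

set_option synthInstance.maxHeartbeats 1000000 in
lemma isClosed_suppIn (hI : MeasurableSet I) : IsClosed {f : L2S J | SuppIn J f I} := by
  have hIc : MeasurableSet Iᶜ := hI.compl
  have hset : {f : L2S J | SuppIn J f I} = (fun f => indLM J Iᶜ f) ⁻¹' {0} := by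
    ext f
    simp only [Set.mem_setOf_eq, Set.mem_preimage, Set.mem_singleton_iff]
    constructor
    · intro h
      apply Lp.ext
      filter_upwards [indLM_coeFn J hIc f, h, Lp.coeFn_zero ℝ 2 (volume.restrict J)]
        with x h1 h2 h0
      rw [h1, h0, Pi.zero_apply]
      by_cases hx : x ∈ I
      · exact Set.indicator_of_notMem (by simpa using hx) _
      · rw [Set.indicator_of_mem (by simpa using hx : x ∈ Iᶜ), h2 hx]
    · intro h
      have h2 := indLM_coeFn J hIc f
      rw [h] at h2
      filter_upwards [h2, Lp.coeFn_zero ℝ 2 (volume.restrict J)] with x h1 h0 hx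
      have h3 : x ∈ Iᶜ := by simpa using hx
      have h4 : Iᶜ.indicator ⇑f x = f x := Set.indicator_of_mem h3 _
      rw [← h4, ← h1, h0, Pi.zero_apply]
  rw [hset]
  exact IsClosed.preimage (indLM_continuous J hIc) isClosed_singleton

lemma isClosed_suppSub (V : Submodule ℝ (L2S J)) (hV : IsClosed (V : Set (L2S J)))
    (hI : MeasurableSet I) : IsClosed ((suppSub J V I : Submodule ℝ (L2S J)) : Set (L2S J)) := by
  have hh : ((suppSub J V I : Submodule ℝ (L2S J)) : Set (L2S J))
      = (V : Set (L2S J)) ∩ {f | SuppIn J f I} := rfl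
  rw [hh]
  exact hV.inter (isClosed_suppIn J hI)

end Concrete

section Structural

open MeasureTheory Set Submodule Module

local notation "⟪" x ", " y "⟫" => @inner ℝ _ _ x y

variable {E : Type*} [NormedAddCommGroup E] [InnerProductSpace ℝ E] [CompleteSpace E]

lemma oneSubProjSub_eq {K U : Submodule ℝ E} (hKU : K ≤ U) (hU : IsClosed (U : Set E)) :
    oneSubProjSub K U = U ⊓ Kᗮ := by
  have hclK : K.topologicalClosure ≤ U := K.topologicalClosure_minimal hKU hU
  ext f
  constructor
  · rintro ⟨g, hg, rfl⟩
    have hrw : (LinearMap.id - projL K : E →ₗ[ℝ] E) g = g - projL K g := rfl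
    rw [hrw]
    exact ⟨U.sub_mem hg (hclK (projL_mem K g)), sub_projL_mem K g⟩
  · rintro ⟨hfU, hfK⟩
    refine ⟨f, hfU, ?_⟩
    show f - projL K f = f
    rw [projL_eq_zero K hfK, sub_zero]

variable (J ks : Set ℝ) (a : ℝ)

lemma suppSub_mono_set (V : Submodule ℝ (L2S J)) {I I' : Set ℝ} (h : I ⊆ I') :
    suppSub J V I ≤ suppSub J V I' :=
  fun _ hf => ⟨hf.1, SuppIn_mono J h hf.2⟩

lemma suppSub_mono (I : Set ℝ) {V V' : Submodule ℝ (L2S J)} (h : V ≤ V') :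
    suppSub J V I ≤ suppSub J V' I :=
  fun _ hf => ⟨h hf.1, hf.2⟩

lemma D_le_Vmid (V : Submodule ℝ (L2S J)) :
    VbrevePred J ks V a ⊔ Vbreve J ks V a ≤ Vmid J ks V a := by
  apply sup_le
  · rw [VbrevePred]
    split_ifs with h
    · exact suppSub_mono_set J V (IccP_subset_IccPS ks a)
    · exact bot_le
  · exact suppSub_mono_set J V (IccS_subset_IccPS ks a)

lemma Vbar_eq (V : Submodule ℝ (L2S J)) (hV : IsClosed (V : Set (L2S J))) :
    Vbar J ks V a = Vmid J ks V a ⊓ (VbrevePred J ks V a ⊔ Vbreve J ks V a)ᗮ :=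
  oneSubProjSub_eq (D_le_Vmid J ks a V)
    (isClosed_suppSub J V hV (measurableSet_IccPS ks a))

lemma le_of_no_pred (hks : IsKnotSeq J ks) (h : ¬{b ∈ ks | b < a}.Nonempty) :
    ∀ x ∈ J, a ≤ x := by
  intro x hx
  have h1 : (a : EReal) ≤ sInf ((fun x : ℝ => (x : EReal)) '' ks) := by
    apply le_sInf
    rintro y ⟨b, hbks, rfl⟩
    have hba : ¬b < a := fun hba => h ⟨b, hbks, hba⟩
    exact EReal.coe_le_coe_iff.mpr (not_lt.mp hba)
  have h2 : sInf ((fun x : ℝ => (x : EReal)) '' J) ≤ (x : EReal) := sInf_le ⟨x, hx, rfl⟩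
  rw [hks.inf_eq] at h1
  exact EReal.coe_le_coe_iff.mp (h1.trans h2)

lemma ge_of_no_succ (hks : IsKnotSeq J ks) (h : ¬{b ∈ ks | a < b}.Nonempty) :
    ∀ x ∈ J, x ≤ a := by
  intro x hx
  have h1 : sSup ((fun x : ℝ => (x : EReal)) '' ks) ≤ (a : EReal) := by
    apply sSup_le
    rintro y ⟨b, hbks, rfl⟩
    have hba : ¬a < b := fun hba => h ⟨b, hbks, hba⟩
    exact EReal.coe_le_coe_iff.mpr (not_lt.mp hba)
  have h2 : (x : EReal) ≤ sSup ((fun x : ℝ => (x : EReal)) '' J) := le_sSup ⟨x, hx, rfl⟩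
  rw [hks.sup_eq] at h1
  exact EReal.coe_le_coe_iff.mp (h2.trans h1)

lemma VbrevePred_eq (hJ : J.OrdConnected) (hks : IsKnotSeq J ks) (ha : a ∈ ks)
    (V : Submodule ℝ (L2S J)) :
    suppSub J V (IccP ks a) = VbrevePred J ks V a := by
  rw [VbrevePred]
  split_ifs with h
  · rfl
  · rw [eq_bot_iff]
    rintro f ⟨-, hfs⟩
    have hxa := le_of_no_pred J ks a hks h
    have hf0 : f = 0 := by
      apply Lp.ext
      filter_upwards [hfs, ae_restrict_mem hJ.measurableSet, ae_ne_a J a,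
        Lp.coeFn_zero ℝ 2 (volume.restrict J)] with x h1 h2 h3 h0
      rw [h0, Pi.zero_apply]
      apply h1
      rintro ⟨-, hxle⟩
      exact h3 (le_antisymm hxle (hxa x h2))
    rw [hf0]
    exact Submodule.zero_mem ⊥

lemma vmid_fd (hJ : J.OrdConnected) (hks : IsKnotSeq J ks) {Φ : Set (L2S J)}
    (hΦ : OrthoCenteredBasis J ks Φ) (ha : a ∈ ks) :
    FiniteDimensional ℝ ↥(Vmid J ks (SClos J Φ) a) := by
  classical
  obtain ⟨l, hlJ, hl⟩ : ∃ l, l ∈ J ∧ ∀ x ∈ J, x ∈ IccPS ks a → l ≤ x := by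
    by_cases hne : {b ∈ ks | b < a}.Nonempty
    · obtain ⟨b₀, hb₀ks, hb₀a⟩ := hne
      refine ⟨b₀, hks.subset hb₀ks, fun x _ hxI => ?_⟩
      have h1 : (b₀ : EReal) ≤ predE ks a := le_sSup ⟨b₀, ⟨hb₀ks, hb₀a⟩, rfl⟩
      exact EReal.coe_le_coe_iff.mp (h1.trans hxI.1)
    · exact ⟨a, hks.subset ha, fun x hx _ => le_of_no_pred J ks a hks hne x hx⟩
  obtain ⟨u, huJ, hu⟩ : ∃ u, u ∈ J ∧ ∀ x ∈ J, x ∈ IccPS ks a → x ≤ u := by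
    by_cases hne : {b ∈ ks | a < b}.Nonempty
    · obtain ⟨b₁, hb₁ks, hb₁a⟩ := hne
      refine ⟨b₁, hks.subset hb₁ks, fun x _ hxI => ?_⟩
      have h1 : succE ks a ≤ (b₁ : EReal) := sInf_le ⟨b₁, ⟨hb₁ks, hb₁a⟩, rfl⟩
      exact EReal.coe_le_coe_iff.mp (hxI.2.trans h1)
    · exact ⟨a, hks.subset ha, fun x hx _ => ge_of_no_succ J ks a hks hne x hx⟩
  set K := Set.Icc l u with hK
  have hKJ : K ⊆ J := hJ.out hlJ huJ
  have hfin := hΦ.1.1 K isCompact_Icc hKJ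
  set F := {φ ∈ Φ | ¬∀ᵐ x ∂(volume.restrict J), x ∈ K → φ x = 0} with hF
  have hFsub : F ⊆ Φ := Set.sep_subset _ _
  suffices hle : Vmid J ks (SClos J Φ) a ≤ Submodule.span ℝ F by
    haveI : FiniteDimensional ℝ (Submodule.span ℝ F) := Module.Finite.span_of_finite ℝ hfin
    exact Submodule.finiteDimensional_of_le hle
  rintro f ⟨hfV, hfs⟩
  have hperp : ∀ φ ∈ Φ, φ ∉ F → ⟪φ, f⟫ = 0 := by
    intro φ hφ hnF
    have hvan : ∀ᵐ x ∂(volume.restrict J), x ∈ K → φ x = 0 := by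
      by_contra hcon
      exact hnF ⟨hφ, hcon⟩
    rw [real_inner_comm, MeasureTheory.L2.inner_def]
    apply integral_eq_zero_of_ae
    filter_upwards [hvan, hfs, ae_restrict_mem hJ.measurableSet] with x h1 h2 h3
    rw [Pi.zero_apply]
    simp only [RCLike.inner_apply, conj_trivial]
    by_cases hKx : x ∈ K
    · rw [h1 hKx, zero_mul]
    · have h4 : x ∉ IccPS ks a := fun hI => hKx ⟨hl x h3 hI, hu x h3 hI⟩
      rw [h2 h4, mul_zero]
  set Fsp := Submodule.span ℝ F with hFsp
  haveI : FiniteDimensional ℝ Fsp := Module.Finite.span_of_finite ℝ hfin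
  haveI : CompleteSpace Fsp := FiniteDimensional.complete ℝ Fsp
  set g : L2S J := ↑(orthogonalProjection Fsp f) with hg
  have hgF : g ∈ Fsp := (orthogonalProjection Fsp f).2
  have hfg : f - g ∈ Fspᗮ := Submodule.sub_starProjection_mem_orthogonal (K := Fsp) f
  have hmem : f - g ∈ (Submodule.span ℝ Φ)ᗮ := by
    rw [Submodule.mem_orthogonal]
    intro w hw
    induction hw using Submodule.span_induction with
    | mem φ hφ =>
      by_cases hφF : φ ∈ F
      · exact (Submodule.mem_orthogonal Fsp _).mp hfg φ (Submodule.subset_span hφF)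
      · have hfperp := hperp φ hφ hφF
        have hgperp : ⟪φ, g⟫ = 0 := by
          have hφo : φ ∈ Fspᗮ := by
            rw [Submodule.mem_orthogonal']
            intro w2 hw2
            induction hw2 using Submodule.span_induction with
            | mem ψ hψ => exact hΦ.2 hφ (hFsub hψ) (fun he => hφF (he ▸ hψ))
            | zero => rw [inner_zero_right]
            | add x y _ _ hx hy => rw [inner_add_right, hx, hy, add_zero]
            | smul c x _ hx => rw [real_inner_smul_right, hx, mul_zero]
          exact (Submodule.mem_orthogonal' Fsp φ).mp hφo g hgF
        rw [inner_sub_right, hfperp, hgperp, sub_zero]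
    | zero => rw [inner_zero_left]
    | add x y _ _ hx hy => rw [inner_add_left, hx, hy, add_zero]
    | smul c x _ hx => rw [real_inner_smul_left, hx, mul_zero]
  have hfgV : f - g ∈ SClos J Φ := by
    apply Submodule.sub_mem _ hfV
    exact (Submodule.span ℝ Φ).le_topologicalClosure (Submodule.span_mono hFsub hgF)
  have hcl : SClos J Φ ≤ ((Submodule.span ℝ Φ)ᗮ)ᗮ :=
    Submodule.topologicalClosure_minimal _ (Submodule.span ℝ Φ).le_orthogonal_orthogonal
      (Submodule.span ℝ Φ)ᗮ.isClosed_orthogonal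
  have h0 : ⟪f - g, f - g⟫ = 0 :=
    (Submodule.mem_orthogonal _ _).mp (hcl hfgV) (f - g) hmem
  have hfg0 : f = g := by
    have := inner_self_eq_zero.mp h0
    rwa [sub_eq_zero] at this
  rw [hfg0]
  exact hgF

end Structural

end KnotWavelet
open KnotWavelet in
theorem T_U_S_dimensions
    (J ks : Set ℝ) (hJ : J.OrdConnected) (hks : IsKnotSeq J ks)
    (Φ₀ Φ₁ : Set (L2S J))
    (h₀ : OrthoCenteredBasis J ks Φ₀) (h₁ : OrthoCenteredBasis J ks Φ₁)
    (V₀ V₁ : Submodule ℝ (L2S J))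
    (hV₀ : V₀ = SClos J Φ₀) (hV₁ : V₁ = SClos J Φ₁) (hle : V₀ ≤ V₁) :
    ∀ a ∈ ks,
      (Module.finrank ℝ ↥(Tsp J ks V₀ V₁ a) : ℤ) =
          (Module.finrank ℝ ↥(Vbar J ks V₀ a) : ℤ) -
            (Module.finrank ℝ ↥(Ysp J ks V₀ V₁ a) : ℤ) ∧
      (Module.finrank ℝ ↥(Tminus J ks V₀ V₁ a) : ℤ) =
          (Module.finrank ℝ ↥(Yplus J ks V₀ V₁ a) : ℤ) -
            (Module.finrank ℝ ↥(Ysp J ks V₀ V₁ a) : ℤ) ∧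
      (Module.finrank ℝ ↥(Tplus J ks V₀ V₁ a) : ℤ) =
          (Module.finrank ℝ ↥(Yminus J ks V₀ V₁ a) : ℤ) -
            (Module.finrank ℝ ↥(Ysp J ks V₀ V₁ a) : ℤ) ∧
      (Module.finrank ℝ ↥(Usp J ks V₀ V₁ a) : ℤ) =
          (Module.finrank ℝ ↥(Vbar J ks V₀ a) : ℤ) +
            (Module.finrank ℝ ↥(Ysp J ks V₀ V₁ a) : ℤ) -
            (Module.finrank ℝ ↥(Yminus J ks V₀ V₁ a) : ℤ) -
            (Module.finrank ℝ ↥(Yplus J ks V₀ V₁ a) : ℤ) ∧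
      Module.finrank ℝ ↥(Usp J ks V₀ V₁ a) = Module.finrank ℝ ↥(Ssp J ks V₀ V₁ a) := by
  subst hV₀ hV₁
  intro a ha
  classical
  have hJm : MeasurableSet J := hJ.measurableSet
  have hV₀c : IsClosed ((SClos J Φ₀ : Submodule ℝ (L2S J)) : Set (L2S J)) :=
    Submodule.isClosed_topologicalClosure _
  have hV₁c : IsClosed ((SClos J Φ₁ : Submodule ℝ (L2S J)) : Set (L2S J)) :=
    Submodule.isClosed_topologicalClosure _
  have mP := measurableSet_IccP ks a
  have mS := measurableSet_IccS ks a
  haveI hfd1 : FiniteDimensional ℝ ↥(Vmid J ks (SClos J Φ₁) a) := vmid_fd J ks a hJ hks h₁ ha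
  -- abbreviations (definitional)
  have hA : Vbar J ks (SClos J Φ₀) a ≤ Vmid J ks (SClos J Φ₁) a := by
    rw [Vbar_eq J ks a _ hV₀c]
    exact le_trans inf_le_left (suppSub_mono J (IccPS ks a) hle)
  have hB : Vbar J ks (SClos J Φ₁) a ≤ Vmid J ks (SClos J Φ₁) a := by
    rw [Vbar_eq J ks a _ hV₁c]
    exact inf_le_left
  have h1 : ∀ f ∈ Vmid J ks (SClos J Φ₁) a,
      indLM J (IccP ks a) f + indLM J (IccS ks a) f = f :=
    fun f hf => indLM_add_eq J ks a hf.2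
  have hKm' : ∀ f, f ∈ LinearMap.ker (LinearMap.id - indLM J (IccP ks a)) ↔
      indLM J (IccP ks a) f = f := by
    intro f
    rw [LinearMap.mem_ker, LinearMap.sub_apply, LinearMap.id_apply, sub_eq_zero, eq_comm]
  have hKp' : ∀ f, f ∈ LinearMap.ker (LinearMap.id - indLM J (IccS ks a)) ↔
      indLM J (IccS ks a) f = f := by
    intro f
    rw [LinearMap.mem_ker, LinearMap.sub_apply, LinearMap.id_apply, sub_eq_zero, eq_comm]
  have hnullPS := ae_not_mem_IccP_inter_IccS J ks a
  have hnullSP : ∀ᵐ x ∂(volume.restrict J), x ∉ IccS ks a ∩ IccP ks a := by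
    filter_upwards [hnullPS] with x hx hmem
    exact hx (by rwa [Set.inter_comm] at hmem)
  have hmm : ∀ f, indLM J (IccP ks a) (indLM J (IccP ks a) f) = indLM J (IccP ks a) f :=
    indLM_indLM_self J mP
  have hpp : ∀ f, indLM J (IccS ks a) (indLM J (IccS ks a) f) = indLM J (IccS ks a) f :=
    indLM_indLM_self J mS
  have hmp : ∀ f, indLM J (IccP ks a) (indLM J (IccS ks a) f) = 0 :=
    indLM_comp_null J mP mS hnullPS
  have hpm : ∀ f, indLM J (IccS ks a) (indLM J (IccP ks a) f) = 0 :=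
    indLM_comp_null J mS mP hnullSP
  have horth : ∀ f g : L2S J,
      (inner ℝ (indLM J (IccP ks a) f) (indLM J (IccS ks a) g) : ℝ) = 0 :=
    inner_indLM_P_S J ks a
  have hBm : ∀ g ∈ Vmid J ks (SClos J Φ₁) a, indLM J (IccP ks a) g = g →
      ∀ b ∈ Vbar J ks (SClos J Φ₁) a, (inner ℝ g b : ℝ) = 0 := by
    intro g hg hgm b hb
    have hgs : SuppIn J g (IccP ks a) := (SuppIn_iff_indLM J mP g).mpr hgm
    have hgD : g ∈ VbrevePred J ks (SClos J Φ₁) a := by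
      rw [← VbrevePred_eq J ks a hJ hks ha]
      exact ⟨hg.1, hgs⟩
    rw [Vbar_eq J ks a _ hV₁c] at hb
    exact (Submodule.mem_orthogonal _ b).mp hb.2 g (le_sup_left (α := Submodule ℝ (L2S J))
      (a := VbrevePred J ks (SClos J Φ₁) a) (b := Vbreve J ks (SClos J Φ₁) a) hgD)
  have hBp : ∀ g ∈ Vmid J ks (SClos J Φ₁) a, indLM J (IccS ks a) g = g →
      ∀ b ∈ Vbar J ks (SClos J Φ₁) a, (inner ℝ g b : ℝ) = 0 := by
    intro g hg hgm b hb
    have hgs : SuppIn J g (IccS ks a) := (SuppIn_iff_indLM J mS g).mpr hgm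
    have hgD : g ∈ Vbreve J ks (SClos J Φ₁) a := ⟨hg.1, hgs⟩
    rw [Vbar_eq J ks a _ hV₁c] at hb
    exact (Submodule.mem_orthogonal _ b).mp hb.2 g (le_sup_right (α := Submodule ℝ (L2S J))
      (a := VbrevePred J ks (SClos J Φ₁) a) (b := Vbreve J ks (SClos J Φ₁) a) hgD)
  have hAm : ∀ f ∈ Vbar J ks (SClos J Φ₀) a, indLM J (IccP ks a) f = f → f = 0 := by
    intro f hf hfm
    have hfs : SuppIn J f (IccP ks a) := (SuppIn_iff_indLM J mP f).mpr hfm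
    rw [Vbar_eq J ks a _ hV₀c] at hf
    have hfD : f ∈ VbrevePred J ks (SClos J Φ₀) a := by
      rw [← VbrevePred_eq J ks a hJ hks ha]
      exact ⟨hf.1.1, hfs⟩
    have h0 : (inner ℝ f f : ℝ) = 0 := (Submodule.mem_orthogonal _ f).mp hf.2 f
      (le_sup_left (α := Submodule ℝ (L2S J)) (a := VbrevePred J ks (SClos J Φ₀) a)
        (b := Vbreve J ks (SClos J Φ₀) a) hfD)
    exact inner_self_eq_zero.mp h0
  have hAp : ∀ f ∈ Vbar J ks (SClos J Φ₀) a, indLM J (IccS ks a) f = f → f = 0 := by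
    intro f hf hfm
    have hfs : SuppIn J f (IccS ks a) := (SuppIn_iff_indLM J mS f).mpr hfm
    rw [Vbar_eq J ks a _ hV₀c] at hf
    have hfD : f ∈ Vbreve J ks (SClos J Φ₀) a := ⟨hf.1.1, hfs⟩
    have h0 : (inner ℝ f f : ℝ) = 0 := (Submodule.mem_orthogonal _ f).mp hf.2 f
      (le_sup_right (α := Submodule ℝ (L2S J)) (a := VbrevePred J ks (SClos J Φ₀) a)
        (b := Vbreve J ks (SClos J Φ₀) a) hfD)
    exact inner_self_eq_zero.mp h0
  obtain ⟨c1, c2, c3, c4, c5⟩ := abstract_all (indLM J (IccP ks a)) (indLM J (IccS ks a))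
    (Vbar J ks (SClos J Φ₀) a) (Vbar J ks (SClos J Φ₁) a) (Vmid J ks (SClos J Φ₁) a)
    (LinearMap.ker (LinearMap.id - indLM J (IccP ks a)))
    (LinearMap.ker (LinearMap.id - indLM J (IccS ks a)))
    hA hB h1 hKm' hKp' hmm hpp hmp hpm horth hBm hBp hAm hAp
  -- identifications
  have hTm : Tminus J ks (SClos J Φ₀) (SClos J Φ₁) a
      = Tsp J ks (SClos J Φ₀) (SClos J Φ₁) a ⊓
        LinearMap.ker (LinearMap.id - indLM J (IccP ks a)) := by
    ext f
    constructor
    · rintro ⟨hf1, hf2⟩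
      exact ⟨hf1, (hKm' f).mpr ((SuppIn_iff_indLM J mP f).mp hf2)⟩
    · rintro ⟨hf1, hf2⟩
      exact ⟨hf1, (SuppIn_iff_indLM J mP f).mpr ((hKm' f).mp hf2)⟩
  have hTp : Tplus J ks (SClos J Φ₀) (SClos J Φ₁) a
      = Tsp J ks (SClos J Φ₀) (SClos J Φ₁) a ⊓
        LinearMap.ker (LinearMap.id - indLM J (IccS ks a)) := by
    ext f
    constructor
    · rintro ⟨hf1, hf2⟩
      exact ⟨hf1, (hKp' f).mpr ((SuppIn_iff_indLM J mS f).mp hf2)⟩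
    · rintro ⟨hf1, hf2⟩
      exact ⟨hf1, (SuppIn_iff_indLM J mS f).mpr ((hKp' f).mp hf2)⟩
  have hUeq : Usp J ks (SClos J Φ₀) (SClos J Φ₁) a
      = Tsp J ks (SClos J Φ₀) (SClos J Φ₁) a ⊓
        ((Tsp J ks (SClos J Φ₀) (SClos J Φ₁) a ⊓
            LinearMap.ker (LinearMap.id - indLM J (IccP ks a))) ⊔
          (Tsp J ks (SClos J Φ₀) (SClos J Φ₁) a ⊓
            LinearMap.ker (LinearMap.id - indLM J (IccS ks a))))ᗮ := by
    show Tsp J ks (SClos J Φ₀) (SClos J Φ₁) a ⊓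
        (Tminus J ks (SClos J Φ₀) (SClos J Φ₁) a ⊔ Tplus J ks (SClos J Φ₀) (SClos J Φ₁) a)ᗮ
      = _
    rw [hTm, hTp]
  have c1' : Module.finrank ℝ ↥(Tsp J ks (SClos J Φ₀) (SClos J Φ₁) a)
      + Module.finrank ℝ ↥(Ysp J ks (SClos J Φ₀) (SClos J Φ₁) a)
      = Module.finrank ℝ ↥(Vbar J ks (SClos J Φ₀) a) := c1
  have c2' : Module.finrank ℝ ↥(Tminus J ks (SClos J Φ₀) (SClos J Φ₁) a)
      + Module.finrank ℝ ↥(Ysp J ks (SClos J Φ₀) (SClos J Φ₁) a)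
      = Module.finrank ℝ ↥(Yplus J ks (SClos J Φ₀) (SClos J Φ₁) a) := by
    rw [hTm]; exact c2
  have c3' : Module.finrank ℝ ↥(Tplus J ks (SClos J Φ₀) (SClos J Φ₁) a)
      + Module.finrank ℝ ↥(Ysp J ks (SClos J Φ₀) (SClos J Φ₁) a)
      = Module.finrank ℝ ↥(Yminus J ks (SClos J Φ₀) (SClos J Φ₁) a) := by
    rw [hTp]; exact c3
  have c4' : Module.finrank ℝ ↥(Usp J ks (SClos J Φ₀) (SClos J Φ₁) a)
      + Module.finrank ℝ ↥(Tminus J ks (SClos J Φ₀) (SClos J Φ₁) a)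
      + Module.finrank ℝ ↥(Tplus J ks (SClos J Φ₀) (SClos J Φ₁) a)
      = Module.finrank ℝ ↥(Tsp J ks (SClos J Φ₀) (SClos J Φ₁) a) := by
    rw [hUeq, hTm, hTp]; exact c4
  have c5' : Module.finrank ℝ ↥(Ssp J ks (SClos J Φ₀) (SClos J Φ₁) a)
      = Module.finrank ℝ ↥(Usp J ks (SClos J Φ₀) (SClos J Φ₁) a) := by
    show Module.finrank ℝ ↥((Usp J ks (SClos J Φ₀) (SClos J Φ₁) a).map
      (indLM J (IccS ks a) - indLM J (IccP ks a))) = _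
    rw [hUeq]
    exact c5
  exact ⟨by omega, by omega, by omega, by omega, by omega⟩
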